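/- Let η : ℤ² → A whose range is A (|A| ≥ 2), let S be an mlc η-generating set with conv(S) of positive area, and suppose ℓ and its reversal ℓ̄ are both one-sided nonexpansive directions on X_η. Then there exists an η-generating set T ⊆ S with diam_ℓ(T) ≤ ⌈(1/2) diam_ℓ(S)⌉, where diam_ℓ(T) is the number of distinct lines parallel to ℓ meeting T. -/

import Mathlib

set_option linter.unusedSectionVars false

/-- The number of distinct `S`-patterns of a configuration `η : ℤ² → A`. -/
noncomputable def patternCount {A : Type*} (η : ℤ × ℤ → A) (S : Finset (ℤ × ℤ)) : ℕ :=
  Set.ncard {w : (↥S) → A | ∃ u : ℤ × ℤ, ∀ s : ↥S, w s = η (u + (s : ℤ × ℤ))}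

/-- The canonical embedding of the lattice `ℤ²` into `ℝ²`. -/
def emb (g : ℤ × ℤ) : ℝ × ℝ := ((g.1 : ℝ), (g.2 : ℝ))

/-- A finite subset of `ℤ²` is (lattice) convex if it contains every lattice point of its
real convex hull. -/
def IsLatticeConvex (S : Finset (ℤ × ℤ)) : Prop :=
  ∀ g : ℤ × ℤ, emb g ∈ convexHull ℝ (emb '' (S : Set (ℤ × ℤ))) → g ∈ S

/-- Cross product of lattice vectors; lines parallel to the direction `v` are the level
sets of `cross v`, and the half plane of the oriented line through the origin with
direction `v` is `{g : 0 ≤ cross v g}`. -/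
def cross (v g : ℤ × ℤ) : ℤ := v.1 * g.2 - v.2 * g.1

section Aux

lemma cross_add (v g h : ℤ × ℤ) : cross v (g + h) = cross v g + cross v h := by
  simp [cross]; ring

lemma cross_neg (v g : ℤ × ℤ) : cross (-v) g = - cross v g := by
  simp [cross]; ring

variable {A : Type*} [Fintype A] (η : ℤ × ℤ → A)

/-- The set of `S`-patterns of `η`. -/
def patSet (S : Finset (ℤ × ℤ)) : Set ((↥S) → A) :=
  {w | ∃ u : ℤ × ℤ, ∀ s : ↥S, w s = η (u + (s : ℤ × ℤ))}

lemma patternCount_eq (S : Finset (ℤ × ℤ)) : patternCount η S = (patSet η S).ncard := rfl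

/-- Restriction of an `S`-pattern to a subset `T ⊆ S`. -/
def restrictPat {T S : Finset (ℤ × ℤ)} (h : T ⊆ S) (w : (↥S) → A) : (↥T) → A :=
  fun t => w ⟨(t : ℤ × ℤ), h t.2⟩

lemma image_restrictPat {T S : Finset (ℤ × ℤ)} (h : T ⊆ S) :
    restrictPat (A := A) h '' patSet η S = patSet η T := by
  ext w
  constructor
  · rintro ⟨w', ⟨u, hu⟩, rfl⟩
    exact ⟨u, fun t => hu ⟨(t : ℤ × ℤ), h t.2⟩⟩
  · rintro ⟨u, hu⟩
    refine ⟨fun s => η (u + (s : ℤ × ℤ)), ⟨u, fun _ => rfl⟩, ?_⟩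
    funext t
    exact (hu t).symm

lemma patternCount_mono {T S : Finset (ℤ × ℤ)} (h : T ⊆ S) :
    patternCount η T ≤ patternCount η S := by
  rw [patternCount_eq, patternCount_eq, ← image_restrictPat η h]
  exact Set.ncard_image_le (Set.toFinite _)

lemma patternCount_inj {T S : Finset (ℤ × ℤ)} (h : T ⊆ S)
    (hc : patternCount η T = patternCount η S)
    (u₁ u₂ : ℤ × ℤ) (hagree : ∀ s ∈ T, η (u₁ + s) = η (u₂ + s)) :
    ∀ s ∈ S, η (u₁ + s) = η (u₂ + s) := by
  have hinj : Set.InjOn (restrictPat (A := A) h) (patSet η S) := by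
    apply Set.injOn_of_ncard_image_eq ?_ (Set.toFinite _)
    rw [image_restrictPat η h, ← patternCount_eq, ← patternCount_eq, hc]
  set w₁ : (↥S) → A := fun s => η (u₁ + (s : ℤ × ℤ)) with hw₁
  set w₂ : (↥S) → A := fun s => η (u₂ + (s : ℤ × ℤ)) with hw₂
  have h₁ : w₁ ∈ patSet η S := ⟨u₁, fun _ => rfl⟩
  have h₂ : w₂ ∈ patSet η S := ⟨u₂, fun _ => rfl⟩
  have : w₁ = w₂ := by
    apply hinj h₁ h₂
    funext t
    exact hagree (t : ℤ × ℤ) t.2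
  intro s hs
  exact congrFun this ⟨s, hs⟩

lemma patternCount_singleton (hsurj : Function.Surjective η) (g : ℤ × ℤ) :
    patternCount η {g} = Fintype.card A := by
  have huniv : patSet η {g} = Set.univ := by
    ext w
    simp only [Set.mem_univ, iff_true]
    obtain ⟨z, hz⟩ := hsurj (w ⟨g, Finset.mem_singleton_self g⟩)
    refine ⟨z - g, fun s => ?_⟩
    have hs : (s : ℤ × ℤ) = g := Finset.mem_singleton.mp s.2
    have : s = (⟨g, Finset.mem_singleton_self g⟩ : ↥({g} : Finset (ℤ × ℤ))) :=
      Subtype.ext hs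
    rw [this]
    show w _ = η (z - g + g)
    rw [sub_add_cancel, hz]
  rw [patternCount_eq, huniv, Set.ncard_univ, Nat.card_eq_fintype_card,
    Fintype.card_fun]
  rw [Fintype.card_coe, Finset.card_singleton, pow_one]

/-- Descent: a nonempty convex set with few patterns contains a nonempty convex
generating subset. -/
lemma descent (hsurj : Function.Surjective η) :
    ∀ n (T : Finset (ℤ × ℤ)), T.card ≤ n → T.Nonempty → IsLatticeConvex T →
    patternCount η T + 2 ≤ T.card + Fintype.card A →
    ∃ T₀ : Finset (ℤ × ℤ), T₀ ⊆ T ∧ IsLatticeConvex T₀ ∧ T₀.Nonempty ∧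
      (∀ g ∈ T₀, IsLatticeConvex (T₀.erase g) →
        patternCount η T₀ = patternCount η (T₀.erase g)) := by
  intro n
  induction n with
  | zero =>
    intro T hcard hne _ _
    exact absurd (Finset.card_pos.mpr hne) (by omega)
  | succ n ih =>
    intro T hcard hne hconv hbound
    by_cases hgen : ∀ g ∈ T, IsLatticeConvex (T.erase g) →
        patternCount η T = patternCount η (T.erase g)
    · exact ⟨T, Finset.Subset.refl T, hconv, hne, hgen⟩
    · push_neg at hgen
      obtain ⟨g, hgT, hconv', hne'⟩ := hgen
      have hsub : T.erase g ⊆ T := Finset.erase_subset g T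
      have hlt : patternCount η (T.erase g) < patternCount η T :=
        lt_of_le_of_ne (patternCount_mono η hsub) (Ne.symm hne')
      have hT2 : 2 ≤ T.card := by
        by_contra hc
        have h1 : T.card = 1 := by
          have := Finset.card_pos.mpr hne; omega
        obtain ⟨x, hx⟩ := Finset.card_eq_one.mp h1
        have hgx : g = x := by rw [hx] at hgT; exact Finset.mem_singleton.mp hgT
        rw [hx, ← hgx] at hbound
        rw [patternCount_singleton η hsurj g, Finset.card_singleton] at hbound
        omega
      have hcard' : (T.erase g).card = T.card - 1 := Finset.card_erase_of_mem hgT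
      have hne'' : (T.erase g).Nonempty := Finset.card_pos.mp (by omega)
      obtain ⟨T₀, h1, h2, h3, h4⟩ := ih (T.erase g) (by omega) hne'' hconv' (by omega)
      exact ⟨T₀, h1.trans hsub, h2, h3, h4⟩

lemma crossR_linear (v : ℤ × ℤ) :
    IsLinearMap ℝ (fun p : ℝ × ℝ => (v.1 : ℝ) * p.2 - (v.2 : ℝ) * p.1) := by
  constructor
  · intro p q; simp [Prod.fst_add, Prod.snd_add]; ring
  · intro c p; simp [Prod.smul_fst, Prod.smul_snd, smul_eq_mul]; ring

lemma slab_convex {S : Finset (ℤ × ℤ)} (hS : IsLatticeConvex S) (v : ℤ × ℤ) (c : ℤ) :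
    IsLatticeConvex (S.filter (fun s => c ≤ cross v s)) := by
  intro g hg
  set H := S.filter (fun s => c ≤ cross v s) with hH
  have hsub : (H : Set (ℤ × ℤ)) ⊆ (S : Set (ℤ × ℤ)) := Finset.filter_subset _ _
  have hgS : g ∈ S := hS g (convexHull_mono (Set.image_mono (f := emb) hsub) hg)
  have hhalf : convexHull ℝ (emb '' (H : Set (ℤ × ℤ))) ⊆
      {p : ℝ × ℝ | (c : ℝ) ≤ (v.1 : ℝ) * p.2 - (v.2 : ℝ) * p.1} := by
    apply convexHull_min
    · rintro p ⟨s, hs, rfl⟩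
      have hcs : c ≤ cross v s := (Finset.mem_filter.mp hs).2
      have : (c : ℝ) ≤ ((cross v s : ℤ) : ℝ) := by exact_mod_cast hcs
      have he : ((cross v s : ℤ) : ℝ) = (v.1 : ℝ) * (emb s).2 - (v.2 : ℝ) * (emb s).1 := by
        simp [emb, cross]
      exact this.trans_eq he
    · exact convex_halfSpace_ge (crossR_linear v) (c : ℝ)
  have hc : (c : ℝ) ≤ (v.1 : ℝ) * (g.2 : ℝ) - (v.2 : ℝ) * (g.1 : ℝ) := hhalf hg
  have : c ≤ cross v g := by
    have : (c : ℝ) ≤ ((cross v g : ℤ) : ℝ) := by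
      refine hc.trans_eq ?_; push_cast [cross]; ring
    exact_mod_cast this
  exact Finset.mem_filter.mpr ⟨hgS, this⟩

lemma two_lines {S : Finset (ℤ × ℤ)} (hSne : S.Nonempty)
    (harea : ¬ Collinear ℝ (emb '' (S : Set (ℤ × ℤ)))) {v : ℤ × ℤ} (hv : v ≠ 0) :
    ∃ s ∈ S, ∃ t ∈ S, cross v s ≠ cross v t := by
  by_contra hcon
  push_neg at hcon
  apply harea
  obtain ⟨s₀, hs₀⟩ := hSne
  rw [collinear_iff_exists_forall_eq_smul_vadd]
  refine ⟨emb s₀, ((v.1 : ℝ), (v.2 : ℝ)), ?_⟩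
  rintro p ⟨s, hs, rfl⟩
  have hcr : cross v s = cross v s₀ := hcon s hs s₀ hs₀
  have hkey : (v.1 : ℝ) * ((s.2 : ℝ) - (s₀.2 : ℝ)) = (v.2 : ℝ) * ((s.1 : ℝ) - (s₀.1 : ℝ)) := by
    have : (v.1 * s.2 - v.2 * s.1 : ℤ) = v.1 * s₀.2 - v.2 * s₀.1 := hcr
    have := congrArg (fun z : ℤ => (z : ℝ)) this
    push_cast at this
    linarith
  have hv' : (v.1 : ℝ) ≠ 0 ∨ (v.2 : ℝ) ≠ 0 := by
    by_contra hc
    push_neg at hc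
    apply hv
    have h1 : v.1 = 0 := by exact_mod_cast hc.1
    have h2 : v.2 = 0 := by exact_mod_cast hc.2
    exact Prod.ext h1 h2
  rcases hv' with h1 | h2
  · refine ⟨((s.1 : ℝ) - (s₀.1 : ℝ)) / (v.1 : ℝ), ?_⟩
    have h2' : ((s.1 : ℝ) - s₀.1) / v.1 * v.2 = (s.2 : ℝ) - s₀.2 := by
      field_simp
      nlinarith [hkey]
    apply Prod.ext <;> simp [emb, Prod.smul_fst, Prod.smul_snd, smul_eq_mul]
    · field_simp; ring
    · rw [h2']; ring
  · refine ⟨((s.2 : ℝ) - (s₀.2 : ℝ)) / (v.2 : ℝ), ?_⟩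
    have h1' : ((s.2 : ℝ) - s₀.2) / v.2 * v.1 = (s.1 : ℝ) - s₀.1 := by
      field_simp
      nlinarith [hkey]
    apply Prod.ext <;> simp [emb, Prod.smul_fst, Prod.smul_snd, smul_eq_mul]
    · rw [h1']; ring
    · field_simp; ring

lemma half_split (C : Finset ℤ) (k : ℕ) (hk1 : 1 ≤ k) (hkn : k < C.card)
    (h2k : C.card ≤ 2 * k) :
    ∃ ct ∈ C, ∃ cb ∈ C,
      (C.filter (fun x => ct ≤ x)).card ≤ k ∧
      (C.filter (fun x => x ≤ cb)).card ≤ k ∧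
      (∀ x ∈ C, ct ≤ x ∨ x ≤ cb) ∧
      (∃ x ∈ C, x < ct) ∧ (∃ x ∈ C, cb < x) := by
  set n := C.card with hn
  set f := C.orderEmbOfFin (rfl : C.card = n) with hf
  have hmem : ∀ i, f i ∈ C := fun i => C.orderEmbOfFin_mem rfl i
  have hsurj : ∀ x ∈ C, ∃ i, f i = x := by
    intro x hx
    have : x ∈ Set.range f := by
      rw [Finset.range_orderEmbOfFin]
      exact hx
    exact this
  have hle : ∀ i j, f i ≤ f j ↔ i ≤ j := fun i j => f.le_iff_le
  have hlt : ∀ i j, f i < f j ↔ i < j := fun i j => f.lt_iff_lt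
  set it : Fin n := ⟨n - k, by omega⟩ with hit
  set ib : Fin n := ⟨k - 1, by omega⟩ with hib
  refine ⟨f it, hmem it, f ib, hmem ib, ?_, ?_, ?_, ?_, ?_⟩
  · have himg : C.filter (fun x => f it ≤ x) =
        (Finset.univ.filter (fun i : Fin n => it ≤ i)).image (fun i => f i) := by
      ext x
      simp only [Finset.mem_filter, Finset.mem_image, Finset.mem_univ, true_and]
      constructor
      · rintro ⟨hxC, hxle⟩
        obtain ⟨i, rfl⟩ := hsurj x hxC
        exact ⟨i, (hle it i).mp hxle, rfl⟩
      · rintro ⟨i, hi, rfl⟩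
        exact ⟨hmem i, (hle it i).mpr hi⟩
    rw [himg, Finset.card_image_of_injective _ f.injective]
    have : Finset.univ.filter (fun i : Fin n => it ≤ i) = Finset.Ici it := by
      ext i; simp
    rw [this, Fin.card_Ici]
    simp [hit]
    omega
  · have himg : C.filter (fun x => x ≤ f ib) =
        (Finset.univ.filter (fun i : Fin n => i ≤ ib)).image (fun i => f i) := by
      ext x
      simp only [Finset.mem_filter, Finset.mem_image, Finset.mem_univ, true_and]
      constructor
      · rintro ⟨hxC, hxle⟩
        obtain ⟨i, rfl⟩ := hsurj x hxC
        exact ⟨i, (hle i ib).mp hxle, rfl⟩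
      · rintro ⟨i, hi, rfl⟩
        exact ⟨hmem i, (hle i ib).mpr hi⟩
    rw [himg, Finset.card_image_of_injective _ f.injective]
    have : Finset.univ.filter (fun i : Fin n => i ≤ ib) = Finset.Iic ib := by
      ext i; simp
    rw [this, Fin.card_Iic]
    simp [hib]
    omega
  · intro x hx
    obtain ⟨i, rfl⟩ := hsurj x hx
    rcases le_or_gt it i with h | h
    · exact Or.inl ((hle it i).mpr h)
    · refine Or.inr ((hle i ib).mpr ?_)
      have : (i : ℕ) < n - k := h
      have : (i : ℕ) ≤ k - 1 := by omega
      exact this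
  · refine ⟨f ⟨0, by omega⟩, hmem _, (hlt _ it).mpr ?_⟩
    show (0 : ℕ) < n - k
    omega
  · refine ⟨f ⟨n - 1, by omega⟩, hmem _, (hlt ib _).mpr ?_⟩
    show (k - 1 : ℕ) < n - 1
    omega

variable [TopologicalSpace A] [DiscreteTopology A]

lemma orbit_approx {x : ℤ × ℤ → A}
    (hx : x ∈ closure {y : ℤ × ℤ → A | ∃ u : ℤ × ℤ, y = fun g => η (g + u)})
    (F : Finset (ℤ × ℤ)) : ∃ u : ℤ × ℤ, ∀ f ∈ F, x f = η (f + u) := by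
  have hU : (Set.pi (↑F : Set (ℤ × ℤ)) (fun f => {x f})) ∈ nhds x := by
    apply set_pi_mem_nhds F.finite_toSet
    intro a _
    exact IsOpen.mem_nhds (isOpen_discrete _) rfl
  obtain ⟨z, hzU, hzO⟩ := mem_closure_iff_nhds.mp hx _ hU
  obtain ⟨u, rfl⟩ := hzO
  exact ⟨u, fun f hf => (hzU f hf).symm⟩

/-- If `H` is the part of `S` on lines with `cross w`-value `≥ c`, the direction `w` is
one-sided nonexpansive, and some point of `S` lies strictly below `c`, then `H` has strictly
fewer patterns than `S`. -/
lemma patternCount_strict (S : Finset (ℤ × ℤ)) (hSne : S.Nonempty) (w : ℤ × ℤ) (c : ℤ)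
    (hlow : ∃ s ∈ S, cross w s < c)
    (hnonexp : ∃ x ∈ closure {y : ℤ × ℤ → A | ∃ u : ℤ × ℤ, y = fun g => η (g + u)},
      ∃ y ∈ closure {y : ℤ × ℤ → A | ∃ u : ℤ × ℤ, y = fun g => η (g + u)},
        x ≠ y ∧ ∀ g : ℤ × ℤ, 0 ≤ cross w g → x g = y g) :
    patternCount η (S.filter (fun s => c ≤ cross w s)) ≠ patternCount η S := by
  intro heq
  set H := S.filter (fun s => c ≤ cross w s) with hH
  have hsub : H ⊆ S := Finset.filter_subset _ _
  obtain ⟨x, hx, y, hy, hxy, hagree⟩ := hnonexp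
  have hD : ∃ c', (∃ g, x g ≠ y g ∧ cross w g = c') ∧
      ∀ z, (∃ g, x g ≠ y g ∧ cross w g = z) → z ≤ c' := by
    apply Int.exists_greatest_of_bdd
    · refine ⟨-1, ?_⟩
      rintro z ⟨g, hg, rfl⟩
      by_contra hz
      push_neg at hz
      exact hg (hagree g (by omega))
    · obtain ⟨g, hg⟩ := Function.ne_iff.mp hxy
      exact ⟨cross w g, g, hg, rfl⟩
  obtain ⟨cstar, ⟨g₀, hg₀ne, hg₀c⟩, hmax⟩ := hD
  obtain ⟨s₀, hs₀S, hs₀min⟩ := Finset.exists_min_image S (cross w) hSne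
  have hs₀c : cross w s₀ < c := by
    obtain ⟨s, hsS, hs⟩ := hlow
    exact lt_of_le_of_lt (hs₀min s hsS) hs
  set u : ℤ × ℤ := g₀ - s₀ with hu
  have hcrossu : cross w u = cstar - cross w s₀ := by
    have : cross w (u + s₀) = cross w u + cross w s₀ := cross_add w u s₀
    rw [hu] at this ⊢
    have h2 : g₀ - s₀ + s₀ = g₀ := by ring
    rw [h2, hg₀c] at this
    omega
  have hagreeH : ∀ s ∈ H, x (u + s) = y (u + s) := by
    intro s hs
    by_contra hne
    have hcs : c ≤ cross w s := (Finset.mem_filter.mp hs).2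
    have : cross w (u + s) ≤ cstar := hmax _ ⟨u + s, hne, rfl⟩
    rw [cross_add, hcrossu] at this
    omega
  obtain ⟨ux, hux⟩ := orbit_approx η hx (S.image (fun s => u + s))
  obtain ⟨uy, huy⟩ := orbit_approx η hy (S.image (fun s => u + s))
  have hxS : ∀ s ∈ S, x (u + s) = η ((ux + u) + s) := by
    intro s hs
    rw [hux (u + s) (Finset.mem_image_of_mem _ hs)]
    congr 1; ring
  have hyS : ∀ s ∈ S, y (u + s) = η ((uy + u) + s) := by
    intro s hs
    rw [huy (u + s) (Finset.mem_image_of_mem _ hs)]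
    congr 1; ring
  have hinj := patternCount_inj η hsub heq (ux + u) (uy + u) ?_
  · have : x (u + s₀) = y (u + s₀) := by
      rw [hxS s₀ hs₀S, hyS s₀ hs₀S, hinj s₀ hs₀S]
    have hg : u + s₀ = g₀ := by rw [hu]; ring
    rw [hg] at this
    exact hg₀ne this
  · intro s hs
    rw [← hxS s (hsub hs), ← hyS s (hsub hs), hagreeH s hs]

end Aux

/-- If `ℓ` (direction `v`) and its reversal (direction `-v`) are both one-sided
nonexpansive on `X_η` and `S` is an mlc `η`-generating set of positive area, then there
is an `η`-generating set `T ⊆ S` with `diam_ℓ(T) ≤ ⌈diam_ℓ(S)/2⌉`, where `diam_ℓ`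
counts the lines parallel to `ℓ` meeting the set. -/
theorem exists_generating_subset_half_diameter
    {A : Type*} [Fintype A] [TopologicalSpace A] [DiscreteTopology A]
    (hA : 2 ≤ Fintype.card A)
    (η : ℤ × ℤ → A) (hsurj : Function.Surjective η)
    (S : Finset (ℤ × ℤ)) (hSne : S.Nonempty) (hSconv : IsLatticeConvex S)
    (hgen : ∀ g ∈ S, IsLatticeConvex (S.erase g) →
      patternCount η S = patternCount η (S.erase g))
    (hmlc1 : (patternCount η S : ℚ) ≤ (1 / 2) * S.card + Fintype.card A - 1)
    (hmlc2 : ∀ T : Finset (ℤ × ℤ), T ⊆ S → T ≠ S → T.Nonempty → IsLatticeConvex T →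
      ((1 : ℚ) / 2) * T.card + Fintype.card A - 1 < patternCount η T)
    (harea : ¬ Collinear ℝ (emb '' (S : Set (ℤ × ℤ))))
    (v : ℤ × ℤ) (hv : v ≠ 0)
    (hnonexp : ∃ x ∈ closure {y : ℤ × ℤ → A | ∃ u : ℤ × ℤ, y = fun g => η (g + u)},
      ∃ y ∈ closure {y : ℤ × ℤ → A | ∃ u : ℤ × ℤ, y = fun g => η (g + u)},
        x ≠ y ∧ ∀ g : ℤ × ℤ, 0 ≤ cross v g → x g = y g)
    (hnonexp' : ∃ x ∈ closure {y : ℤ × ℤ → A | ∃ u : ℤ × ℤ, y = fun g => η (g + u)},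
      ∃ y ∈ closure {y : ℤ × ℤ → A | ∃ u : ℤ × ℤ, y = fun g => η (g + u)},
        x ≠ y ∧ ∀ g : ℤ × ℤ, 0 ≤ cross (-v) g → x g = y g) :
    ∃ T : Finset (ℤ × ℤ), T ⊆ S ∧ IsLatticeConvex T ∧ T.Nonempty ∧
      (∀ g ∈ T, IsLatticeConvex (T.erase g) →
        patternCount η T = patternCount η (T.erase g)) ∧
      (T.image fun t => cross v t).card ≤ ⌈((S.image fun t => cross v t).card : ℚ) / 2⌉₊ := by
  classical
  set a := Fintype.card A with ha
  set C := S.image (fun t => cross v t) with hC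
  set n := C.card with hn
  set k := ⌈(n : ℚ) / 2⌉₊ with hk
  -- at least two lines
  have hn2 : 2 ≤ n := by
    obtain ⟨s, hs, t, ht, hst⟩ := two_lines hSne harea hv
    exact Finset.one_lt_card.mpr
      ⟨cross v s, Finset.mem_image_of_mem _ hs, cross v t, Finset.mem_image_of_mem _ ht, hst⟩
  -- basic facts about k
  have hkn : k < n := by
    have h1 : k ≤ n - 1 := by
      rw [hk]
      apply Nat.ceil_le.mpr
      have : ((n - 1 : ℕ) : ℚ) = (n : ℚ) - 1 := by
        push_cast [Nat.cast_sub (by omega : 1 ≤ n)]; ring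
      rw [this]
      have : (2 : ℚ) ≤ (n : ℚ) := by exact_mod_cast hn2
      linarith
    omega
  have h2k : n ≤ 2 * k := by
    have h1 : (n : ℚ) / 2 ≤ (k : ℚ) := Nat.le_ceil _
    have : (n : ℚ) ≤ 2 * (k : ℚ) := by linarith
    exact_mod_cast this
  have hk1 : 1 ≤ k := by omega
  -- split the lines into a top part and a bottom part
  obtain ⟨ct, hct, cb, hcb, hcard_t, hcard_b, hcover, ⟨xt, hxt, hxt'⟩, ⟨xb, hxb, hxb'⟩⟩ :=
    half_split C k hk1 hkn h2k
  set Ht := S.filter (fun s => ct ≤ cross v s) with hHt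
  set Hb := S.filter (fun s => cross v s ≤ cb) with hHb
  -- Hb written as an upper slab in direction -v
  have hHb' : Hb = S.filter (fun s => -cb ≤ cross (-v) s) := by
    apply Finset.filter_congr
    intro s _
    simp only [cross_neg]
    omega
  have hHtconv : IsLatticeConvex Ht := slab_convex hSconv v ct
  have hHbconv : IsLatticeConvex Hb := by
    rw [hHb']
    exact slab_convex hSconv (-v) (-cb)
  -- covering
  have hcover' : S.card ≤ Ht.card + Hb.card := by
    have hsub : S ⊆ Ht ∪ Hb := by
      intro s hs
      rcases hcover (cross v s) (Finset.mem_image_of_mem _ hs) with h | h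
      · exact Finset.mem_union_left _ (Finset.mem_filter.mpr ⟨hs, h⟩)
      · exact Finset.mem_union_right _ (Finset.mem_filter.mpr ⟨hs, h⟩)
    calc S.card ≤ (Ht ∪ Hb).card := Finset.card_le_card hsub
      _ ≤ Ht.card + Hb.card := Finset.card_union_le _ _
  -- image bounds
  have himg_t : (Ht.image (fun t => cross v t)).card ≤ k := by
    refine le_trans (Finset.card_le_card ?_) hcard_t
    intro x hx
    obtain ⟨s, hs, rfl⟩ := Finset.mem_image.mp hx
    obtain ⟨hsS, hsc⟩ := Finset.mem_filter.mp hs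
    exact Finset.mem_filter.mpr ⟨Finset.mem_image_of_mem _ hsS, hsc⟩
  have himg_b : (Hb.image (fun t => cross v t)).card ≤ k := by
    refine le_trans (Finset.card_le_card ?_) hcard_b
    intro x hx
    obtain ⟨s, hs, rfl⟩ := Finset.mem_image.mp hx
    obtain ⟨hsS, hsc⟩ := Finset.mem_filter.mp hs
    exact Finset.mem_filter.mpr ⟨Finset.mem_image_of_mem _ hsS, hsc⟩
  -- strict pattern count drops
  have hstrict_t : patternCount η Ht ≠ patternCount η S := by
    apply patternCount_strict η S hSne v ct ?_ hnonexp
    obtain ⟨s, hs, rfl⟩ := Finset.mem_image.mp hxt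
    exact ⟨s, hs, hxt'⟩
  have hstrict_b : patternCount η Hb ≠ patternCount η S := by
    rw [hHb']
    apply patternCount_strict η S hSne (-v) (-cb) ?_ hnonexp'
    obtain ⟨s, hs, rfl⟩ := Finset.mem_image.mp hxb
    refine ⟨s, hs, ?_⟩
    rw [cross_neg]
    omega
  -- pattern count bound for S
  have hPS : 2 * patternCount η S + 2 ≤ S.card + 2 * a := by
    have h1 : (2 * (patternCount η S : ℚ) + 2 : ℚ) ≤ (S.card : ℚ) + 2 * (a : ℚ) := by
      rw [ha]
      linarith [hmlc1]
    exact_mod_cast h1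
  have hSC : n ≤ S.card := by
    rw [hn, hC]
    exact Finset.card_image_le
  -- choose the bigger half
  have key : ∀ H : Finset (ℤ × ℤ), H ⊆ S → IsLatticeConvex H →
      (H.image (fun t => cross v t)).card ≤ k →
      patternCount η H ≠ patternCount η S → S.card ≤ 2 * H.card →
      ∃ T : Finset (ℤ × ℤ), T ⊆ S ∧ IsLatticeConvex T ∧ T.Nonempty ∧
        (∀ g ∈ T, IsLatticeConvex (T.erase g) →
          patternCount η T = patternCount η (T.erase g)) ∧
        (T.image fun t => cross v t).card ≤ ⌈((S.image fun t => cross v t).card : ℚ) / 2⌉₊ := by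
    intro H hHS hHconv hHimg hHstrict hHcard
    have hHlt : patternCount η H < patternCount η S :=
      lt_of_le_of_ne (patternCount_mono η hHS) hHstrict
    have hHne : H.Nonempty := Finset.card_pos.mp (by omega)
    have hHbound : patternCount η H + 2 ≤ H.card + Fintype.card A := by
      rw [← ha]; omega
    obtain ⟨T, hT1, hT2, hT3, hT4⟩ :=
      descent η hsurj H.card H le_rfl hHne hHconv hHbound
    refine ⟨T, hT1.trans hHS, hT2, hT3, hT4, ?_⟩
    calc (T.image fun t => cross v t).card
        ≤ (H.image fun t => cross v t).card :=
          Finset.card_le_card (Finset.image_subset_image hT1)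
      _ ≤ k := hHimg
      _ = ⌈((S.image fun t => cross v t).card : ℚ) / 2⌉₊ := by rw [hk, hn, hC]
  rcases le_total Ht.card Hb.card with h | h
  · exact key Hb (Finset.filter_subset _ _) hHbconv himg_b hstrict_b (by omega)
  · exact key Ht (Finset.filter_subset _ _) hHtconv himg_t hstrict_t (by omega)
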